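/- Let D be a digraph with a partition V(D) = A⁺ ∪ A⁻ ∪ R such that there are no edges from R to A⁺, no edges from A⁻ to R, and no edges within A⁺ ∪ A⁻. If the induced subdigraph D[R] has a perfect decomposition, then D has a perfect decomposition. -/

import Mathlib

open Finset

variable {V : Type*}

/-- Out-degree of a vertex in a digraph. -/
noncomputable def outDeg (D : V → V → Prop) (v : V) : ℕ := Nat.card {u // D v u}

/-- In-degree of a vertex in a digraph. -/
noncomputable def inDeg (D : V → V → Prop) (v : V) : ℕ := Nat.card {u // D u v}

/-- The (signed) excess of a vertex: `d⁺(v) − d⁻(v)`. -/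
noncomputable def exInt (D : V → V → Prop) (v : V) : ℤ :=
  (outDeg D v : ℤ) - (inDeg D v : ℤ)

/-- Positive excess `ex⁺(v) = max{d⁺(v)−d⁻(v),0}`. -/
noncomputable def exPlus (D : V → V → Prop) (v : V) : ℕ := (exInt D v).toNat

/-- Negative excess `ex⁻(v) = max{d⁻(v)−d⁺(v),0}`. -/
noncomputable def exMinus (D : V → V → Prop) (v : V) : ℕ := (-(exInt D v)).toNat

/-- The excess of a digraph: `ex(D) = ∑_v ex⁺(v) = (1/2)∑_v |ex(v)|`. -/
noncomputable def exD [Fintype V] (D : V → V → Prop) : ℕ := ∑ v, exPlus D v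

/-- The list of (directed) edges traversed by a path, given as its list of vertices. -/
def pathEdges (p : List V) : List (V × V) := p.zip p.tail

/-- A directed path of `D` with at least one edge, given by its list of (distinct) vertices. -/
def IsPath (D : V → V → Prop) (p : List V) : Prop :=
  p.Nodup ∧ 2 ≤ p.length ∧ ∀ e ∈ pathEdges p, D e.1 e.2

/-- A path decomposition of `D`: a list of paths whose edge sets partition `E(D)`. -/
def IsPathDecomp (D : V → V → Prop) (Ps : List (List V)) : Prop :=
  (∀ p ∈ Ps, IsPath D p) ∧ ((Ps.map pathEdges).flatten.Nodup) ∧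
    ∀ u v : V, D u v ↔ (u, v) ∈ (Ps.map pathEdges).flatten

section Helpers
-- ====== helpers ======
attribute [local instance] Classical.propDecidable

lemma pathEdges_cons_cons (x y : V) (t : List V) :
    pathEdges (x :: y :: t) = (x, y) :: pathEdges (y :: t) := rfl

lemma pathEdges_singleton (x : V) : pathEdges [x] = [] := rfl

lemma pathEdges_map_fst : ∀ p : List V, (pathEdges p).map Prod.fst = p.dropLast
  | [] => rfl
  | [_] => rfl
  | x :: y :: t => by
    rw [pathEdges_cons_cons, List.map_cons, pathEdges_map_fst (y :: t)]
    simp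

lemma pathEdges_map_snd (p : List V) : (pathEdges p).map Prod.snd = p.tail :=
  List.map_snd_zip (by simp)

noncomputable def ind (P : Prop) : ℕ := if P then 1 else 0

lemma ind_of {P : Prop} (h : P) : ind P = 1 := if_pos h
lemma ind_of_not {P : Prop} (h : ¬ P) : ind P = 0 := if_neg h
@[simp] lemma ind_le_one (P : Prop) : ind P ≤ 1 := by unfold ind; split <;> simp
lemma ind_pos {P : Prop} (h : 0 < ind P) : P := by
  by_contra hc; rw [ind_of_not hc] at h; exact absurd h (by simp)
lemma ind_congr {P Q : Prop} (h : P ↔ Q) : ind P = ind Q := by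
  by_cases hP : P
  · rw [ind_of hP, ind_of (h.1 hP)]
  · rw [ind_of_not hP, ind_of_not (fun hq => hP (h.2 hq))]

noncomputable def cnt (P : α → Prop) (l : List α) : ℕ := (l.map (fun x => ind (P x))).sum

@[simp] lemma cnt_nil (P : α → Prop) : cnt P ([] : List α) = 0 := rfl

@[simp] lemma cnt_cons (P : α → Prop) (a : α) (l : List α) :
    cnt P (a :: l) = ind (P a) + cnt P l := by simp [cnt]

lemma cnt_pos {P : α → Prop} {l : List α} (h : 0 < cnt P l) : ∃ x ∈ l, P x := by
  induction l with
  | nil => simp at h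
  | cons a t ih =>
    rw [cnt_cons] at h
    by_cases ha : P a
    · exact ⟨a, by simp, ha⟩
    · rw [ind_of_not ha] at h
      obtain ⟨x, hx, hPx⟩ := ih (by simpa using h)
      exact ⟨x, by simp [hx], hPx⟩

lemma cnt_map (P : β → Prop) (f : α → β) (l : List α) :
    cnt P (l.map f) = cnt (fun x => P (f x)) l := by
  simp [cnt, List.map_map]; rfl

lemma cnt_nodup_mem {l : List α} (hl : l.Nodup) (v : α) :
    cnt (fun x => x = v) l = ind (v ∈ l) := by
  induction l with
  | nil => simp [ind]
  | cons a t ih =>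
    rw [cnt_cons, ih (List.nodup_cons.1 hl).2]
    rcases List.nodup_cons.1 hl with ⟨hat, _⟩
    by_cases hav : a = v
    · subst hav
      rw [ind_of rfl, ind_of_not hat, ind_of List.mem_cons_self]
    · rw [ind_of_not hav, ind_congr (show v ∈ a :: t ↔ v ∈ t by simp [Ne.symm hav])]
      omega

lemma cnt_flatten (P : α → Prop) (L : List (List α)) :
    cnt P L.flatten = (L.map (cnt P)).sum := by
  induction L with
  | nil => simp
  | cons a t ih => simp [cnt, List.map_append] at *; omega

lemma cnt_nodup_toFinset [Fintype α] {l : List α} (hl : l.Nodup) (P : α → Prop) :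
    cnt P l = (univ.filter (fun x => x ∈ l ∧ P x)).card := by
  induction l with
  | nil => simp [Finset.filter_eq_empty_iff]
  | cons a t ih =>
    rcases List.nodup_cons.1 hl with ⟨hat, ht⟩
    have hsplit : (univ.filter (fun x => x ∈ a :: t ∧ P x))
        = (if P a then {a} else ∅) ∪ (univ.filter (fun x => x ∈ t ∧ P x)) := by
      ext x
      simp only [Finset.mem_filter, Finset.mem_univ, true_and, List.mem_cons,
        Finset.mem_union]
      by_cases hPa : P a
      · simp only [if_pos hPa, Finset.mem_singleton]
        constructor
        · rintro ⟨hx | hx, hPx⟩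
          exacts [Or.inl hx, Or.inr ⟨hx, hPx⟩]
        · rintro (rfl | ⟨hx, hPx⟩)
          exacts [⟨Or.inl rfl, hPa⟩, ⟨Or.inr hx, hPx⟩]
      · simp only [if_neg hPa, Finset.notMem_empty, false_or]
        constructor
        · rintro ⟨hx | hx, hPx⟩
          exacts [absurd (hx ▸ hPx) hPa, ⟨hx, hPx⟩]
        · rintro ⟨hx, hPx⟩
          exact ⟨Or.inr hx, hPx⟩
    have hdisj : Disjoint (if P a then ({a} : Finset α) else ∅)
        (univ.filter (fun x => x ∈ t ∧ P x)) := by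
      by_cases hPa : P a <;> simp [hPa, Finset.disjoint_left, hat]
    rw [cnt_cons, ih ht, hsplit, Finset.card_union_of_disjoint hdisj]
    by_cases hPa : P a
    · rw [ind_of hPa]; simp [hPa]
    · rw [ind_of_not hPa]; simp [hPa]

-- swap-sum helper
lemma sum_cnt_swap [Fintype V] (l : List α) (g : V → α → Prop) :
    ∑ v : V, cnt (g v) l = (l.map (fun x => ∑ v : V, ind (g v x))).sum := by
  induction l with
  | nil => simp [cnt]
  | cons a t ih =>
    simp only [cnt, List.map_cons, List.sum_cons, Finset.sum_add_distrib] at ih ⊢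
    omega

lemma cnt_add_congr (l : List α) (P Q S T : α → Prop)
    (H : ∀ x ∈ l, ind (P x) + ind (Q x) = ind (S x) + ind (T x)) :
    cnt P l + cnt Q l = cnt S l + cnt T l := by
  induction l with
  | nil => simp
  | cons a t ih =>
    have h1 := H a (by simp)
    have h2 := ih (fun x hx => H x (by simp [hx]))
    simp only [cnt_cons]
    omega

-- ====== path indicator identity ======
lemma path_indicator {D : V → V → Prop} {p : List V} (hp : IsPath D p) (v : V) :
    ind (v ∈ p.dropLast) + ind (p.getLast? = some v)
    = ind (v ∈ p.tail) + ind (p.head? = some v) := by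
  obtain ⟨hnd, hlen, _⟩ := hp
  match p with
  | [] => simp at hlen
  | [x] => simp at hlen
  | x :: y :: t =>
    set xs := y :: t with hxs
    have hxs_ne : xs ≠ [] := by simp [hxs]
    have hx_notin : x ∉ xs := (List.nodup_cons.1 hnd).1
    have hnd_xs : xs.Nodup := (List.nodup_cons.1 hnd).2
    have hlast : (x :: xs).getLast? = xs.getLast? := by
      rw [hxs]; exact List.getLast?_cons_cons
    have hdrop : (x :: xs).dropLast = x :: xs.dropLast := by
      simp [hxs]
    have hget := List.getLast?_eq_getLast hxs_ne
    set L := xs.getLast hxs_ne with hL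
    have hLmem : L ∈ xs := List.getLast_mem hxs_ne
    have hxsdecomp : xs.dropLast ++ [L] = xs := List.dropLast_append_getLast hxs_ne
    have hmemiff : ∀ w, w ∈ xs ↔ w ∈ xs.dropLast ∨ w = L := by
      intro w; rw [← hxsdecomp]; simp
    have hLnotdrop : L ∉ xs.dropLast := by
      intro hcon
      have := hxsdecomp ▸ hnd_xs
      rw [List.nodup_append] at this
      exact this.2.2 L hcon L (by simp) rfl
    rw [hlast, hdrop, hget]
    have hhead : (x :: xs).head? = some x := rfl
    rw [hhead]
    by_cases hvx : v = x
    · subst hvx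
      rw [ind_of List.mem_cons_self, ind_of rfl,
        ind_of_not (fun h : some L = some v => hx_notin (Option.some_inj.1 h ▸ hLmem))]
      rw [ind_congr (show v ∈ (v :: xs).tail ↔ v ∈ xs from Iff.rfl), ind_of_not hx_notin]
    · rw [ind_of_not (fun h : some x = some v => hvx (Option.some_inj.1 h).symm),
        ind_congr (show v ∈ x :: xs.dropLast ↔ v ∈ xs.dropLast by simp [hvx]),
        ind_congr (show v ∈ (x :: xs).tail ↔ v ∈ xs by rfl)]
      by_cases hdL : v ∈ xs.dropLast
      · rw [ind_of hdL, ind_of ((hmemiff v).2 (Or.inl hdL)),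
          ind_of_not (fun h : some L = some v => hLnotdrop (Option.some_inj.1 h ▸ hdL))]
      · by_cases hvL : v = L
        · subst hvL
          rw [ind_of_not hdL, ind_of rfl, ind_of hLmem]
        · rw [ind_of_not hdL, ind_of_not (fun h : some L = some v => hvL (Option.some_inj.1 h).symm),
            ind_of_not (fun h => (by rw [hmemiff] at h; tauto : False))]

-- ====== degree = path counts ======
lemma outDeg_filter' [Fintype V] (D : V → V → Prop) (v : V) :
    outDeg D v = (univ.filter (fun u => D v u)).card := by
  rw [outDeg, Nat.card_eq_fintype_card, Fintype.card_subtype]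

lemma inDeg_filter' [Fintype V] (D : V → V → Prop) (v : V) :
    inDeg D v = (univ.filter (fun u => D u v)).card := by
  rw [inDeg, Nat.card_eq_fintype_card, Fintype.card_subtype]

lemma outDeg_eq_cnt_flat [Fintype V] {D : V → V → Prop} {Qs : List (List V)}
    (hQ : IsPathDecomp D Qs) (v : V) :
    outDeg D v = cnt (fun e : V × V => e.1 = v) (Qs.map pathEdges).flatten := by
  rw [outDeg_filter', cnt_nodup_toFinset hQ.2.1]
  apply Finset.card_bij (fun u _ => ((v, u) : V × V))
  · intro u hu
    simp only [Finset.mem_filter, Finset.mem_univ, true_and] at hu ⊢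
    exact ⟨(hQ.2.2 v u).1 hu, trivial⟩
  · intro a _ b _ h
    simpa using h
  · intro e he
    simp only [Finset.mem_filter, Finset.mem_univ, true_and] at he
    obtain ⟨hmem, hfst⟩ := he
    refine ⟨e.2, ?_, ?_⟩
    · simp only [Finset.mem_filter, Finset.mem_univ, true_and]
      have := (hQ.2.2 e.1 e.2).2 hmem
      rwa [hfst] at this
    · rw [← hfst]

lemma inDeg_eq_cnt_flat [Fintype V] {D : V → V → Prop} {Qs : List (List V)}
    (hQ : IsPathDecomp D Qs) (v : V) :
    inDeg D v = cnt (fun e : V × V => e.2 = v) (Qs.map pathEdges).flatten := by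
  rw [inDeg_filter', cnt_nodup_toFinset hQ.2.1]
  apply Finset.card_bij (fun u _ => ((u, v) : V × V))
  · intro u hu
    simp only [Finset.mem_filter, Finset.mem_univ, true_and] at hu ⊢
    exact ⟨(hQ.2.2 u v).1 hu, trivial⟩
  · intro a _ b _ h
    simpa using h
  · intro e he
    simp only [Finset.mem_filter, Finset.mem_univ, true_and] at he
    obtain ⟨hmem, hsnd⟩ := he
    refine ⟨e.1, ?_, ?_⟩
    · simp only [Finset.mem_filter, Finset.mem_univ, true_and]
      have := (hQ.2.2 e.1 e.2).2 hmem
      rwa [hsnd] at this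
    · rw [← hsnd]

lemma outDeg_eq_cnt_paths [Fintype V] {D : V → V → Prop} {Qs : List (List V)}
    (hQ : IsPathDecomp D Qs) (v : V) :
    outDeg D v = cnt (fun p : List V => v ∈ p.dropLast) Qs := by
  rw [outDeg_eq_cnt_flat hQ v, cnt_flatten, List.map_map]
  show (Qs.map (cnt (fun e : V × V => e.1 = v) ∘ pathEdges)).sum = _
  have : ∀ p ∈ Qs, (cnt (fun e : V × V => e.1 = v) ∘ pathEdges) p
      = (fun p : List V => ind (v ∈ p.dropLast)) p := by
    intro p hp
    have hnd : p.dropLast.Nodup := (List.dropLast_sublist p).nodup (hQ.1 p hp).1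
    show cnt (fun e : V × V => e.1 = v) (pathEdges p) = _
    have h1 : cnt (fun e : V × V => e.1 = v) (pathEdges p)
        = cnt (fun x => x = v) ((pathEdges p).map Prod.fst) :=
      (cnt_map (fun x => x = v) Prod.fst (pathEdges p)).symm
    rw [h1, pathEdges_map_fst, cnt_nodup_mem hnd]
  rw [List.map_congr_left this]
  rfl

lemma inDeg_eq_cnt_paths [Fintype V] {D : V → V → Prop} {Qs : List (List V)}
    (hQ : IsPathDecomp D Qs) (v : V) :
    inDeg D v = cnt (fun p : List V => v ∈ p.tail) Qs := by
  rw [inDeg_eq_cnt_flat hQ v, cnt_flatten, List.map_map]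
  show (Qs.map (cnt (fun e : V × V => e.2 = v) ∘ pathEdges)).sum = _
  have : ∀ p ∈ Qs, (cnt (fun e : V × V => e.2 = v) ∘ pathEdges) p
      = (fun p : List V => ind (v ∈ p.tail)) p := by
    intro p hp
    have hnd : p.tail.Nodup := (List.tail_sublist p).nodup (hQ.1 p hp).1
    show cnt (fun e : V × V => e.2 = v) (pathEdges p) = _
    have h1 : cnt (fun e : V × V => e.2 = v) (pathEdges p)
        = cnt (fun x => x = v) ((pathEdges p).map Prod.snd) :=
      (cnt_map (fun x => x = v) Prod.snd (pathEdges p)).symm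
    rw [h1, pathEdges_map_snd, cnt_nodup_mem hnd]
  rw [List.map_congr_left this]
  rfl

noncomputable def starts (Qs : List (List V)) (v : V) : ℕ :=
  cnt (fun p : List V => p.head? = some v) Qs

noncomputable def ends (Qs : List (List V)) (v : V) : ℕ :=
  cnt (fun p : List V => p.getLast? = some v) Qs

lemma deg_identity [Fintype V] {D : V → V → Prop} {Qs : List (List V)}
    (hQ : IsPathDecomp D Qs) (v : V) :
    outDeg D v + ends Qs v = inDeg D v + starts Qs v := by
  rw [outDeg_eq_cnt_paths hQ v, inDeg_eq_cnt_paths hQ v]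
  exact cnt_add_congr Qs _ _ _ _ (fun p hp => path_indicator (hQ.1 p hp) v)

lemma sum_starts [Fintype V] {D : V → V → Prop} {Qs : List (List V)}
    (hQ : IsPathDecomp D Qs) :
    ∑ v, starts Qs v = Qs.length := by
  unfold starts
  rw [sum_cnt_swap]
  have : ∀ p ∈ Qs, (fun p : List V => ∑ v : V, ind (p.head? = some v)) p
      = (fun _ : List V => 1) p := by
    intro p hp
    obtain ⟨x, t, rfl⟩ : ∃ x t, p = x :: t := by
      match p, (hQ.1 p hp).2.1 with
      | x :: t, _ => exact ⟨x, t, rfl⟩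
    show (∑ v : V, ind ((x :: t).head? = some v)) = 1
    rw [Finset.sum_eq_single x]
    · exact ind_of rfl
    · intro b _ hbx
      exact ind_of_not (fun h : some x = some b => hbx (Option.some_inj.1 h).symm)
    · intro hx
      exact absurd (Finset.mem_univ x) hx
  rw [List.map_congr_left this]
  simp

-- ====== perfect decompositions ======
lemma perfect_starts [Fintype V] {D : V → V → Prop} {Qs : List (List V)}
    (hQ : IsPathDecomp D Qs) (hlen : Qs.length = exD D) :
    ∀ v, starts Qs v = exPlus D v ∧ ends Qs v = exMinus D v := by
  have hdi : ∀ v, (starts Qs v : ℤ) - ends Qs v = exInt D v := by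
    intro v
    have := deg_identity hQ v
    unfold exInt
    omega
  have hle : ∀ v ∈ univ, exPlus D v ≤ starts Qs v := by
    intro v _
    have := hdi v
    unfold exPlus
    omega
  have hsum : ∑ v, exPlus D v = ∑ v, starts Qs v := by
    rw [sum_starts hQ, hlen]
    rfl
  have hpt := (Finset.sum_eq_sum_iff_of_le hle).1 hsum
  intro v
  have h1 : starts Qs v = exPlus D v := (hpt v (Finset.mem_univ v)).symm
  refine ⟨h1, ?_⟩
  have := hdi v
  unfold exPlus at h1
  unfold exMinus
  omega

lemma exists_start [Fintype V] {D : V → V → Prop} {Qs : List (List V)}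
    (hQ : IsPathDecomp D Qs) (hlen : Qs.length = exD D) {v : V}
    (h : 0 < exInt D v) : ∃ p ∈ Qs, p.head? = some v := by
  apply cnt_pos (P := fun p : List V => p.head? = some v) (l := Qs)
  have := (perfect_starts hQ hlen v).1
  unfold starts at this
  rw [this]
  unfold exPlus
  omega

lemma exists_end [Fintype V] {D : V → V → Prop} {Qs : List (List V)}
    (hQ : IsPathDecomp D Qs) (hlen : Qs.length = exD D) {v : V}
    (h : exInt D v < 0) : ∃ p ∈ Qs, p.getLast? = some v := by
  apply cnt_pos (P := fun p : List V => p.getLast? = some v) (l := Qs)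
  have := (perfect_starts hQ hlen v).2
  unfold ends at this
  rw [this]
  unfold exMinus
  omega

-- ====== adding one edge: degrees ======
section AddEdge
variable [Fintype V] {D : V → V → Prop} {a r : V}

lemma card_filter_iff' [Fintype α] (p q : α → Prop) (ip : DecidablePred p)
    (iq : DecidablePred q) (h : ∀ x, p x ↔ q x) :
    (@Finset.filter α p ip univ).card = (@Finset.filter α q iq univ).card := by
  apply Finset.card_bij (fun x _ => x)
  · intro x hx
    simp only [Finset.mem_filter, Finset.mem_univ, true_and] at hx ⊢
    exact (h x).1 hx
  · intro x _ y _ hxy; exact hxy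
  · intro x hx
    simp only [Finset.mem_filter, Finset.mem_univ, true_and] at hx
    exact ⟨x, by simp only [Finset.mem_filter, Finset.mem_univ, true_and]; exact (h x).2 hx, rfl⟩

lemma card_filter_succ [Fintype α] (p q : α → Prop) (ip : DecidablePred p)
    (iq : DecidablePred q) (b : α) (hnb : ¬ p b)
    (h : ∀ x, q x ↔ p x ∨ x = b) :
    (@Finset.filter α q iq univ).card = (@Finset.filter α p ip univ).card + 1 := by
  have heq : @Finset.filter α q iq univ = insert b (@Finset.filter α p ip univ) := by
    ext x
    simp only [Finset.mem_filter, Finset.mem_univ, true_and, Finset.mem_insert, h x]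
    tauto
  rw [heq, Finset.card_insert_of_notMem (by simp [hnb])]

lemma outDeg_add_self (hnotin : ¬ D a r) :
    outDeg (fun u w => D u w ∨ (u, w) = (a, r)) a = outDeg D a + 1 := by
  rw [outDeg_filter', outDeg_filter']
  exact card_filter_succ _ _ _ _ r hnotin (fun u => by simp [Prod.ext_iff])

lemma outDeg_add_ne {v : V} (hv : v ≠ a) :
    outDeg (fun u w => D u w ∨ (u, w) = (a, r)) v = outDeg D v := by
  rw [outDeg_filter', outDeg_filter']
  exact card_filter_iff' _ _ _ _ (fun u => by simp [Prod.ext_iff, hv])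

lemma inDeg_add_self (hnotin : ¬ D a r) :
    inDeg (fun u w => D u w ∨ (u, w) = (a, r)) r = inDeg D r + 1 := by
  rw [inDeg_filter', inDeg_filter']
  exact card_filter_succ _ _ _ _ a hnotin (fun u => by simp [Prod.ext_iff])

lemma inDeg_add_ne {v : V} (hv : v ≠ r) :
    inDeg (fun u w => D u w ∨ (u, w) = (a, r)) v = inDeg D v := by
  rw [inDeg_filter', inDeg_filter']
  exact card_filter_iff' _ _ _ _ (fun u => by simp [Prod.ext_iff, hv])

lemma exD_add_edge (ha : a ≠ r) (hnotin : ¬ D a r) (hsrc : inDeg D a = 0) :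
    exD (fun u w => D u w ∨ (u, w) = (a, r))
      = exD D + (if 0 < exInt D r then 0 else 1) := by
  set D' := fun u w => D u w ∨ (u, w) = (a, r) with hD'
  have hvother : ∀ v, v ≠ a → v ≠ r → exPlus D' v = exPlus D v := by
    intro v hva hvr
    unfold exPlus exInt
    rw [outDeg_add_ne hva, inDeg_add_ne hvr]
  have hea : exPlus D' a = exPlus D a + 1 := by
    unfold exPlus exInt
    rw [outDeg_add_self hnotin, inDeg_add_ne ha, hsrc]
    push_cast
    omega
  have her : exPlus D' r = exPlus D r - (if 0 < exInt D r then 1 else 0) := by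
    unfold exPlus
    have h1 : exInt D' r = exInt D r - 1 := by
      unfold exInt
      rw [inDeg_add_self hnotin, outDeg_add_ne (Ne.symm ha)]
      push_cast
      omega
    rw [h1]
    unfold exPlus exInt at *
    split <;> omega
  unfold exD
  rw [← Finset.add_sum_erase _ _ (Finset.mem_univ a),
    ← Finset.add_sum_erase _ _ (show r ∈ univ.erase a from Finset.mem_erase.2 ⟨Ne.symm ha, Finset.mem_univ r⟩)]
  rw [show (∑ v : V, exPlus D v) = exPlus D a + (exPlus D r + ∑ v ∈ (univ.erase a).erase r, exPlus D v) from by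
    rw [Finset.add_sum_erase _ _ (show r ∈ univ.erase a from Finset.mem_erase.2 ⟨Ne.symm ha, Finset.mem_univ r⟩),
      Finset.add_sum_erase _ _ (Finset.mem_univ a)]]
  have hrest : ∑ v ∈ (univ.erase a).erase r, exPlus D' v
      = ∑ v ∈ (univ.erase a).erase r, exPlus D v := by
    apply Finset.sum_congr rfl
    intro v hv
    rw [Finset.mem_erase, Finset.mem_erase] at hv
    exact hvother v hv.2.1 hv.1
  rw [hrest, hea, her]
  have hplus : 0 < exInt D r → 0 < exPlus D r := by
    unfold exPlus; omega
  split <;> [skip; skip] <;> rename_i hcase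
  · have := hplus hcase
    omega
  · omega

end AddEdge

-- ====== extension lemma ======
lemma isPath_mono {D D' : V → V → Prop} (h : ∀ u w, D u w → D' u w) {p : List V}
    (hp : IsPath D p) : IsPath D' p :=
  ⟨hp.1, hp.2.1, fun e he => h e.1 e.2 (hp.2.2 e he)⟩

lemma mem_tail_edge {p : List V} {v : V} (h : v ∈ p.tail) :
    ∃ x, (x, v) ∈ pathEdges p := by
  rw [← pathEdges_map_snd] at h
  obtain ⟨e, he, hev⟩ := List.mem_map.1 h
  exact ⟨e.1, by rwa [show (e.1, v) = e from by rw [← hev]]⟩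

lemma mem_dropLast_edge {p : List V} {v : V} (h : v ∈ p.dropLast) :
    ∃ x, (v, x) ∈ pathEdges p := by
  rw [← pathEdges_map_fst] at h
  obtain ⟨e, he, hev⟩ := List.mem_map.1 h
  exact ⟨e.2, by rwa [show (v, e.2) = e from by rw [← hev]]⟩

lemma extend_src [Fintype V] (D : V → V → Prop) (a r : V) (ha : a ≠ r)
    (hsrc : ∀ x, ¬ D x a) (hnotin : ¬ D a r) (Qs : List (List V))
    (hQ : IsPathDecomp D Qs) (hlen : Qs.length = exD D) :
    ∃ Qs' : List (List V), IsPathDecomp (fun u w => D u w ∨ (u, w) = (a, r)) Qs' ∧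
      Qs'.length = exD (fun u w => D u w ∨ (u, w) = (a, r)) := by
  have hina : inDeg D a = 0 := by
    rw [inDeg_filter']
    rw [Finset.card_eq_zero, Finset.filter_eq_empty_iff]
    exact fun x _ => hsrc x
  have hexd := exD_add_edge (D := D) ha hnotin hina
  by_cases hpos : 0 < exInt D r
  · -- prepend `a` to a path starting at `r`
    obtain ⟨p, hpQ, hhead⟩ := exists_start hQ hlen hpos
    obtain ⟨l1, l2, rfl⟩ := List.append_of_mem hpQ
    obtain ⟨t, rfl⟩ : ∃ t, p = r :: t := by
      match p, hhead with
      | x :: t, hh => exact ⟨t, by rw [show x = r from by simpa using hh]⟩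
    have hpath : IsPath D (r :: t) := hQ.1 _ hpQ
    have hanotin : a ∉ r :: t := by
      intro hmem
      rcases List.mem_cons.1 hmem with h | h
      · exact ha h
      · obtain ⟨x, hx⟩ := mem_tail_edge (show a ∈ (r :: t).tail from h)
        exact hsrc x (hpath.2.2 _ hx)
    refine ⟨l1 ++ (a :: r :: t) :: l2, ⟨?_, ?_, ?_⟩, ?_⟩
    · -- all are paths
      intro q hq
      rcases List.mem_append.1 hq with h | h
      · exact isPath_mono (fun u w h => Or.inl h) (hQ.1 q (by simp [h]))
      · rcases List.mem_cons.1 h with h | h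
        · subst h
          refine ⟨List.nodup_cons.2 ⟨hanotin, hpath.1⟩, by simp, ?_⟩
          intro e he
          rw [pathEdges_cons_cons] at he
          rcases List.mem_cons.1 he with h | h
          · subst h; exact Or.inr rfl
          · exact Or.inl (hpath.2.2 _ h)
        · exact isPath_mono (fun u w h => Or.inl h) (hQ.1 q (by simp [h]))
    · -- nodup
      have hperm : List.Perm ((l1 ++ (a :: r :: t) :: l2).map pathEdges).flatten
          ((a, r) :: ((l1 ++ (r :: t) :: l2).map pathEdges).flatten) := by
        simp only [List.map_append, List.map_cons, List.flatten_append, List.flatten_cons,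
          pathEdges_cons_cons, List.cons_append, List.append_assoc]
        exact List.perm_middle
      rw [hperm.nodup_iff]
      refine List.nodup_cons.2 ⟨?_, hQ.2.1⟩
      intro hmem
      exact hnotin ((hQ.2.2 a r).2 hmem)
    · -- membership
      intro u w
      have hperm : List.Perm ((l1 ++ (a :: r :: t) :: l2).map pathEdges).flatten
          ((a, r) :: ((l1 ++ (r :: t) :: l2).map pathEdges).flatten) := by
        simp only [List.map_append, List.map_cons, List.flatten_append, List.flatten_cons,
          pathEdges_cons_cons, List.cons_append, List.append_assoc]
        exact List.perm_middle
      rw [hperm.mem_iff, List.mem_cons]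
      show D u w ∨ (u, w) = (a, r) ↔ _
      rw [hQ.2.2 u w]
      exact or_comm
    · -- length
      simp only [List.length_append, List.length_cons] at hlen ⊢
      rw [hexd, if_pos hpos]
      omega
  · -- new path [a, r]
    refine ⟨[a, r] :: Qs, ⟨?_, ?_, ?_⟩, ?_⟩
    · intro q hq
      rcases List.mem_cons.1 hq with h | h
      · subst h
        refine ⟨by simp [ha], by simp, ?_⟩
        intro e he
        rw [show pathEdges [a, r] = [(a, r)] from rfl] at he
        rw [List.mem_singleton.1 he]
        exact Or.inr rfl
      · exact isPath_mono (fun u w h => Or.inl h) (hQ.1 q h)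
    · simp only [List.map_cons, List.flatten_cons]
      rw [show pathEdges [a, r] = [(a, r)] from rfl]
      refine List.nodup_cons.2 ⟨?_, hQ.2.1⟩
      intro hmem
      exact hnotin ((hQ.2.2 a r).2 hmem)
    · intro u w
      simp only [List.map_cons, List.flatten_cons]
      rw [show pathEdges [a, r] = [(a, r)] from rfl]
      rw [List.cons_append, List.nil_append, List.mem_cons]
      show D u w ∨ (u, w) = (a, r) ↔ _
      rw [hQ.2.2 u w]
      exact or_comm
    · simp only [List.length_cons]
      rw [hexd, if_neg hpos]
      omega

-- ====== reversal ======
lemma pathEdges_append_singleton : ∀ (l : List V) (x : V),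
    pathEdges (l ++ [x]) = pathEdges l ++ (l.getLast?.map (fun y => (y, x))).toList
  | [], x => rfl
  | [a], x => rfl
  | a :: b :: t, x => by
    have ih := pathEdges_append_singleton (b :: t) x
    show pathEdges (a :: b :: (t ++ [x])) = _
    rw [pathEdges_cons_cons]
    show (a, b) :: pathEdges ((b :: t) ++ [x]) = _
    rw [ih, pathEdges_cons_cons]
    rw [show (a :: b :: t).getLast? = (b :: t).getLast? from List.getLast?_cons_cons]
    rfl

lemma pathEdges_reverse : ∀ p : List V,
    pathEdges p.reverse = ((pathEdges p).map Prod.swap).reverse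
  | [] => rfl
  | [x] => rfl
  | x :: y :: t => by
    have ih := pathEdges_reverse (y :: t)
    rw [show (x :: y :: t).reverse = (y :: t).reverse ++ [x] from by simp]
    rw [pathEdges_append_singleton, ih]
    rw [show (y :: t).reverse.getLast? = (y :: t).head? from by
      rw [← List.head?_reverse]; simp]
    rw [pathEdges_cons_cons]
    simp

lemma flatten_map_reverse_perm (L : List (List α)) :
    List.Perm (L.map List.reverse).flatten L.flatten := by
  induction L with
  | nil => simp
  | cons a t ih =>
    simp only [List.map_cons, List.flatten_cons]
    exact List.Perm.append (List.reverse_perm a) ih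

lemma isPath_reverse {D : V → V → Prop} {p : List V} (hp : IsPath D p) :
    IsPath (fun u w => D w u) p.reverse := by
  refine ⟨List.nodup_reverse.2 hp.1, by simp [hp.2.1], ?_⟩
  intro e he
  rw [pathEdges_reverse] at he
  rw [List.mem_reverse] at he
  obtain ⟨e', he', hee⟩ := List.mem_map.1 he
  have := hp.2.2 e' he'
  rw [← hee]
  exact this

lemma flatten_op_perm (Qs : List (List V)) :
    List.Perm ((Qs.map List.reverse).map pathEdges).flatten
      (((Qs.map pathEdges).flatten).map Prod.swap) := by
  have h1 : (Qs.map List.reverse).map pathEdges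
      = Qs.map (fun p => ((pathEdges p).map Prod.swap).reverse) := by
    rw [List.map_map]
    exact List.map_congr_left (fun p _ => pathEdges_reverse p)
  rw [h1]
  have h2 : Qs.map (fun p => ((pathEdges p).map Prod.swap).reverse)
      = ((Qs.map (fun p => (pathEdges p).map Prod.swap)).map List.reverse) := by
    rw [List.map_map]
    rfl
  rw [h2]
  refine (flatten_map_reverse_perm _).trans ?_
  rw [show Qs.map (fun p => (pathEdges p).map Prod.swap)
      = (Qs.map pathEdges).map (List.map Prod.swap) from by rw [List.map_map]; rfl]
  rw [← List.map_flatten]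

lemma isPathDecomp_op {D : V → V → Prop} {Qs : List (List V)}
    (hQ : IsPathDecomp D Qs) :
    IsPathDecomp (fun u w => D w u) (Qs.map List.reverse) := by
  refine ⟨?_, ?_, ?_⟩
  · intro q hq
    obtain ⟨p, hp, rfl⟩ := List.mem_map.1 hq
    exact isPath_reverse (hQ.1 p hp)
  · rw [(flatten_op_perm Qs).nodup_iff]
    exact hQ.2.1.map (fun _ _ h => Prod.swap_injective h)
  · intro u w
    rw [(flatten_op_perm Qs).mem_iff]
    show D w u ↔ _
    rw [hQ.2.2 w u]
    constructor
    · intro h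
      exact List.mem_map.2 ⟨(w, u), h, rfl⟩
    · intro h
      obtain ⟨e, he, hee⟩ := List.mem_map.1 h
      rwa [show (w, u) = e from by
        have := congrArg Prod.swap hee
        rw [Prod.swap_swap, show (u, w).swap = (w, u) from rfl] at this
        exact this.symm]

lemma sum_outDeg_eq_sum_inDeg [Fintype V] (D : V → V → Prop) :
    ∑ v, outDeg D v = ∑ v, inDeg D v := by
  have h1 : ∀ v, outDeg D v = ∑ u, ind (D v u) := by
    intro v
    rw [outDeg_filter', Finset.card_filter]
    exact Finset.sum_congr rfl (fun u _ => rfl)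
  have h2 : ∀ v, inDeg D v = ∑ u, ind (D u v) := by
    intro v
    rw [inDeg_filter', Finset.card_filter]
    exact Finset.sum_congr rfl (fun u _ => rfl)
  simp only [h1, h2]
  exact Finset.sum_comm

lemma exD_op [Fintype V] (D : V → V → Prop) : exD (fun u w => D w u) = exD D := by
  have hout : ∀ v, outDeg (fun u w => D w u) v = inDeg D v := fun v => rfl
  have hin : ∀ v, inDeg (fun u w => D w u) v = outDeg D v := fun v => rfl
  have hplus : ∀ v, exPlus (fun u w => D w u) v = exMinus D v := by
    intro v
    unfold exPlus exMinus exInt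
    rw [hout, hin]
    omega
  unfold exD
  simp only [hplus]
  -- ∑ exMinus = ∑ exPlus
  have hsum := sum_outDeg_eq_sum_inDeg D
  have hz : ∑ v : V, exInt D v = 0 := by
    unfold exInt
    rw [Finset.sum_sub_distrib]
    have : ((∑ v, outDeg D v : ℕ) : ℤ) = ((∑ v, inDeg D v : ℕ) : ℤ) := by rw [hsum]
    push_cast at this
    omega
  have hpm : ∀ v, (exPlus D v : ℤ) - exMinus D v = exInt D v := by
    intro v
    unfold exPlus exMinus
    omega
  have h3 : (∑ v, (exPlus D v : ℤ)) - ∑ v, (exMinus D v : ℤ) = 0 := by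
    rw [← Finset.sum_sub_distrib, Finset.sum_congr rfl (fun v _ => hpm v)]
    exact hz
  have h4 : ((∑ v, exMinus D v : ℕ) : ℤ) = ((∑ v, exPlus D v : ℕ) : ℤ) := by
    push_cast
    omega
  exact_mod_cast h4

lemma extend_snk [Fintype V] (D : V → V → Prop) (r b : V) (hb : b ≠ r)
    (hsnk : ∀ x, ¬ D b x) (hnotin : ¬ D r b) (Qs : List (List V))
    (hQ : IsPathDecomp D Qs) (hlen : Qs.length = exD D) :
    ∃ Qs' : List (List V), IsPathDecomp (fun u w => D u w ∨ (u, w) = (r, b)) Qs' ∧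
      Qs'.length = exD (fun u w => D u w ∨ (u, w) = (r, b)) := by
  have hQop := isPathDecomp_op hQ
  have hlenop : (Qs.map List.reverse).length = exD (fun u w => D w u) := by
    rw [List.length_map, hlen, exD_op D]
  obtain ⟨Qs'', hQ'', hlen''⟩ := extend_src (fun u w => D w u) b r hb
    (fun x => hsnk x) hnotin (Qs.map List.reverse) hQop hlenop
  have hQ3 := isPathDecomp_op hQ''
  have key : (fun u w => (fun u w => D w u) w u ∨ (w, u) = (b, r))
      = (fun u w => D u w ∨ (u, w) = (r, b)) := by
    funext u w
    apply propext
    constructor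
    · rintro (h | h)
      · exact Or.inl h
      · right
        rw [Prod.ext_iff] at h ⊢
        exact ⟨h.2, h.1⟩
    · rintro (h | h)
      · exact Or.inl h
      · right
        rw [Prod.ext_iff] at h ⊢
        exact ⟨h.2, h.1⟩
  have hQ3' : IsPathDecomp (fun u w => D u w ∨ (u, w) = (r, b)) (Qs''.map List.reverse) := by
    rw [← key]
    exact hQ3
  refine ⟨Qs''.map List.reverse, hQ3', ?_⟩
  rw [List.length_map, hlen'']
  rw [← key]
  exact (exD_op _).symm

-- ====== main ======
noncomputable def scard {α : Type*} (P : α → Prop) : ℕ := Nat.card {x // P x}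

lemma scard_congr {α : Type*} {P Q : α → Prop} (h : ∀ x, P x ↔ Q x) : scard P = scard Q :=
  Nat.card_congr (Equiv.subtypeEquivRight h)

lemma scard_pos {α : Type*} [Finite α] {P : α → Prop} {b : α} (h : P b) : 0 < scard P := by
  haveI : Nonempty {x // P x} := ⟨⟨b, h⟩⟩
  exact Nat.card_pos

lemma card_filter_erase {α : Type*} [Fintype α] (p q : α → Prop) (ip : DecidablePred p)
    (iq : DecidablePred q) (b : α) (hb : p b) (h : ∀ x, q x ↔ p x ∧ x ≠ b) :
    (@Finset.filter α q iq univ).card + 1 = (@Finset.filter α p ip univ).card := by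
  have heq : @Finset.filter α q iq univ = (@Finset.filter α p ip univ).erase b := by
    ext x
    simp only [Finset.mem_filter, Finset.mem_erase, Finset.mem_univ, true_and, h x]
    tauto
  have hmem : b ∈ @Finset.filter α p ip univ := Finset.mem_filter.2 ⟨Finset.mem_univ b, hb⟩
  rw [heq, Finset.card_erase_of_mem hmem]
  have hpos : 0 < (@Finset.filter α p ip univ).card := Finset.card_pos.2 ⟨b, hmem⟩
  omega

lemma scard_erase {α : Type*} [Fintype α] {P : α → Prop} {b : α} (h : P b) :
    scard (fun x => P x ∧ x ≠ b) + 1 = scard P := by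
  unfold scard
  rw [Nat.card_eq_fintype_card, Nat.card_eq_fintype_card, Fintype.card_subtype,
    Fintype.card_subtype]
  exact card_filter_erase _ _ _ _ b h (fun x => Iff.rfl)

lemma base_case [Fintype V] (D : V → V → Prop) (R : Set V)
    (hall : ∀ u w, D u w → u ∈ R ∧ w ∈ R)
    (hR : ∃ Ps : List (List V), IsPathDecomp (fun u v => D u v ∧ u ∈ R ∧ v ∈ R) Ps ∧
      Ps.length = exD (fun u v => D u v ∧ u ∈ R ∧ v ∈ R)) :
    ∃ Qs : List (List V), IsPathDecomp D Qs ∧ Qs.length = exD D := by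
  have hDeq : (fun u v => D u v ∧ u ∈ R ∧ v ∈ R) = D := by
    funext u v
    apply propext
    exact ⟨fun h => h.1, fun h => ⟨h, hall u v h⟩⟩
  rwa [hDeq] at hR

lemma main_aux [Fintype V] (n : ℕ) (D : V → V → Prop) (Ap Am R : Set V)
    (hpart : ∀ v : V, (v ∈ Ap ∧ v ∉ Am ∧ v ∉ R) ∨ (v ∉ Ap ∧ v ∈ Am ∧ v ∉ R) ∨
      (v ∉ Ap ∧ v ∉ Am ∧ v ∈ R))
    (hRA : ∀ u ∈ R, ∀ a ∈ Ap, ¬ D u a)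
    (hAR : ∀ a ∈ Am, ∀ u ∈ R, ¬ D a u)
    (hAA : ∀ u ∈ Ap ∪ Am, ∀ w ∈ Ap ∪ Am, ¬ D u w)
    (hR : ∃ Ps : List (List V), IsPathDecomp (fun u v => D u v ∧ u ∈ R ∧ v ∈ R) Ps ∧
      Ps.length = exD (fun u v => D u v ∧ u ∈ R ∧ v ∈ R))
    (hcard : scard (fun e : V × V => D e.1 e.2 ∧ (e.1 ∉ R ∨ e.2 ∉ R)) ≤ n) :
    ∃ Qs : List (List V), IsPathDecomp D Qs ∧ Qs.length = exD D := by
  induction n generalizing D with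
  | zero =>
    apply base_case D R ?_ hR
    intro u w hD
    by_contra hc
    push_neg at hc
    have hP : (fun e : V × V => D e.1 e.2 ∧ (e.1 ∉ R ∨ e.2 ∉ R)) (u, w) := by
      refine ⟨hD, ?_⟩
      by_cases hu : u ∈ R
      · exact Or.inr (fun hw => (hc hu hw).elim)
      · exact Or.inl hu
    have := scard_pos (P := fun e : V × V => D e.1 e.2 ∧ (e.1 ∉ R ∨ e.2 ∉ R)) hP
    omega
  | succ n ih =>
    by_cases hall : ∀ u w, D u w → u ∈ R ∧ w ∈ R
    · exact base_case D R hall hR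
    · push_neg at hall
      obtain ⟨u0, w0, hD0, hbad0⟩ := hall
      set e : V × V := (u0, w0) with he_def
      have hDe : D e.1 e.2 := hD0
      have hbad : e.1 ∉ R ∨ e.2 ∉ R := by
        by_cases hu : u0 ∈ R
        · exact Or.inr (fun hw => hbad0 hu hw)
        · exact Or.inl hu
      have hPe : (fun f : V × V => D f.1 f.2 ∧ (f.1 ∉ R ∨ f.2 ∉ R)) e := ⟨hDe, hbad⟩
      set D' := fun u w => D u w ∧ (u, w) ≠ e with hD'def
      have hRA' : ∀ u ∈ R, ∀ a ∈ Ap, ¬ D' u a := fun u hu a ha h => hRA u hu a ha h.1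
      have hAR' : ∀ a ∈ Am, ∀ u ∈ R, ¬ D' a u := fun a ha u hu h => hAR a ha u hu h.1
      have hAA' : ∀ u ∈ Ap ∪ Am, ∀ w ∈ Ap ∪ Am, ¬ D' u w :=
        fun u hu w hw h => hAA u hu w hw h.1
      have hrestr : (fun u v => D' u v ∧ u ∈ R ∧ v ∈ R)
          = (fun u v => D u v ∧ u ∈ R ∧ v ∈ R) := by
        funext u v
        apply propext
        constructor
        · rintro ⟨⟨h, _⟩, hu, hv⟩
          exact ⟨h, hu, hv⟩
        · rintro ⟨h, hu, hv⟩
          refine ⟨⟨h, ?_⟩, hu, hv⟩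
          intro hc
          rcases hbad with hb | hb
          · exact hb (show e.1 ∈ R from by rw [← hc]; exact hu)
          · exact hb (show e.2 ∈ R from by rw [← hc]; exact hv)
      have hR' : ∃ Ps : List (List V), IsPathDecomp (fun u v => D' u v ∧ u ∈ R ∧ v ∈ R) Ps ∧
          Ps.length = exD (fun u v => D' u v ∧ u ∈ R ∧ v ∈ R) := by
        rw [hrestr]
        exact hR
      have hcard' : scard (fun f : V × V => D' f.1 f.2 ∧ (f.1 ∉ R ∨ f.2 ∉ R)) ≤ n := by
        have h1 : scard (fun f : V × V => D' f.1 f.2 ∧ (f.1 ∉ R ∨ f.2 ∉ R))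
            = scard (fun f : V × V => (D f.1 f.2 ∧ (f.1 ∉ R ∨ f.2 ∉ R)) ∧ f ≠ e) := by
          apply scard_congr
          intro f
          rw [hD'def]
          constructor
          · rintro ⟨⟨h, hne⟩, hb⟩
            exact ⟨⟨h, hb⟩, fun hc => hne (by rw [hc])⟩
          · rintro ⟨⟨h, hb⟩, hne⟩
            exact ⟨⟨h, fun hc => hne (by rw [← hc])⟩, hb⟩
        have h2 := scard_erase (P := fun f : V × V => D f.1 f.2 ∧ (f.1 ∉ R ∨ f.2 ∉ R)) (b := e) hPe
        rw [h1]
        beta_reduce at h2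
        omega
      obtain ⟨Qs, hQs, hlQs⟩ := ih D' hRA' hAR' hAA' hR' hcard'
      have hDeq : D = fun u w => D' u w ∨ (u, w) = (e.1, e.2) := by
        funext u w
        apply propext
        constructor
        · intro h
          by_cases hc : (u, w) = (e.1, e.2)
          · exact Or.inr hc
          · exact Or.inl ⟨h, fun hc2 => hc (by rw [hc2])⟩
        · rintro (h | h)
          · exact h.1
          · rw [Prod.ext_iff] at h
            obtain ⟨h1, h2⟩ := h
            simp only at h1 h2
            rw [h1, h2]
            exact hDe
      rcases hpart e.1 with ⟨h1Ap, _, _⟩ | ⟨_, h1Am, _⟩ | ⟨_, _, h1R⟩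
      · -- e.1 ∈ Ap : e.2 ∈ R, prepend
        have h2R : e.2 ∈ R := by
          rcases hpart e.2 with ⟨h2, _, _⟩ | ⟨_, h2, _⟩ | ⟨_, _, h2⟩
          · exact absurd hDe (hAA e.1 (Or.inl h1Ap) e.2 (Or.inl h2))
          · exact absurd hDe (hAA e.1 (Or.inl h1Ap) e.2 (Or.inr h2))
          · exact h2
        have hne : e.1 ≠ e.2 := by
          intro hc
          rcases hpart e.1 with ⟨_, _, h⟩ | ⟨_, _, h⟩ | ⟨h, _, _⟩
          · exact h (hc ▸ h2R)
          · exact h (hc ▸ h2R)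
          · exact h h1Ap
        have hsrc : ∀ x, ¬ D' x e.1 := by
          intro x hx
          rcases hpart x with ⟨h, _, _⟩ | ⟨_, h, _⟩ | ⟨_, _, h⟩
          · exact hAA x (Or.inl h) e.1 (Or.inl h1Ap) hx.1
          · exact hAA x (Or.inr h) e.1 (Or.inl h1Ap) hx.1
          · exact hRA x h e.1 h1Ap hx.1
        have hnotin' : ¬ D' e.1 e.2 := fun hc => hc.2 rfl
        obtain ⟨Qs', h1, h2⟩ := extend_src D' e.1 e.2 hne hsrc hnotin' Qs hQs hlQs
        rw [hDeq]
        exact ⟨Qs', h1, h2⟩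
      · -- e.1 ∈ Am : impossible
        exfalso
        rcases hpart e.2 with ⟨h2, _, _⟩ | ⟨_, h2, _⟩ | ⟨_, _, h2⟩
        · exact hAA e.1 (Or.inr h1Am) e.2 (Or.inl h2) hDe
        · exact hAA e.1 (Or.inr h1Am) e.2 (Or.inr h2) hDe
        · exact hAR e.1 h1Am e.2 h2 hDe
      · -- e.1 ∈ R : e.2 ∈ Am, append
        have h2Am : e.2 ∈ Am := by
          rcases hpart e.2 with ⟨h2, _, _⟩ | ⟨_, h2, _⟩ | ⟨_, _, h2⟩
          · exact absurd hDe (hRA e.1 h1R e.2 h2)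
          · exact h2
          · rcases hbad with hb | hb
            · exact absurd h1R hb
            · exact absurd h2 hb
        have hne : e.2 ≠ e.1 := by
          intro hc
          rcases hpart e.2 with ⟨_, h, _⟩ | ⟨_, _, h⟩ | ⟨_, h, _⟩
          · exact h h2Am
          · exact h (hc ▸ h1R)
          · exact h h2Am
        have hsnk : ∀ x, ¬ D' e.2 x := by
          intro x hx
          rcases hpart x with ⟨h, _, _⟩ | ⟨_, h, _⟩ | ⟨_, _, h⟩
          · exact hAA e.2 (Or.inr h2Am) x (Or.inl h) hx.1
          · exact hAA e.2 (Or.inr h2Am) x (Or.inr h) hx.1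
          · exact hAR e.2 h2Am x h hx.1
        have hnotin' : ¬ D' e.1 e.2 := fun hc => hc.2 rfl
        obtain ⟨Qs', h1, h2⟩ := extend_snk D' e.1 e.2 hne hsnk hnotin' Qs hQs hlQs
        rw [hDeq]
        exact ⟨Qs', h1, h2⟩

end Helpers

/-- Let `D` have a vertex partition `A⁺ ∪ A⁻ ∪ R` with no edges from `R` to
`A⁺`, none from `A⁻` to `R`, and none inside `A⁺ ∪ A⁻`. If `D[R]` has a perfect decomposition
(a partition of its edges into exactly `ex(D[R])` paths), then so does `D`. -/
theorem perfect_decomp_of_induced {V : Type*} [Fintype V] (D : V → V → Prop)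
    (Ap Am R : Set V)
    (hpart : ∀ v : V, (v ∈ Ap ∧ v ∉ Am ∧ v ∉ R) ∨ (v ∉ Ap ∧ v ∈ Am ∧ v ∉ R) ∨
      (v ∉ Ap ∧ v ∉ Am ∧ v ∈ R))
    (hRA : ∀ u ∈ R, ∀ a ∈ Ap, ¬ D u a)
    (hAR : ∀ a ∈ Am, ∀ u ∈ R, ¬ D a u)
    (hAA : ∀ u ∈ Ap ∪ Am, ∀ w ∈ Ap ∪ Am, ¬ D u w)
    (hR : ∃ Ps : List (List V), IsPathDecomp (fun u v => D u v ∧ u ∈ R ∧ v ∈ R) Ps ∧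
      Ps.length = exD (fun u v => D u v ∧ u ∈ R ∧ v ∈ R)) :
    ∃ Qs : List (List V), IsPathDecomp D Qs ∧ Qs.length = exD D := by
  exact main_aux (scard (fun e : V × V => D e.1 e.2 ∧ (e.1 ∉ R ∨ e.2 ∉ R)))
    D Ap Am R hpart hRA hAR hAA hR (le_refl _)
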